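/- Let θ be a real parameter with 0 < b̃ < θ ≤ a, and θ̃ an estimator with P(|θ̃ − θ| ≥ ε) ≤ c₁(1 − ε²/c₁)^M for all ε ∈ (0, c]. Then there exists c' > 0 such that P(|√(θ̃) − √θ| ≥ ε) ≤ c'(1 − ε²/c')^M for all ε ∈ (0, c] (where √(θ̃) is interpreted as √(max{θ̃, 0}) when θ̃ may be negative). -/

import Mathlib

open MeasureTheory

/-- Square-root part (Lem-8) of Lemma 1: if `0 < b̃ < θ ≤ a` and
`P(|θ̃ − θ| ≥ ε) ≤ c₁(1 − ε²/c₁)^M` for `ε ∈ (0, c]`, then there is `c' > 0` with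
`P(|√θ̃ − √θ| ≥ ε) ≤ c'(1 − ε²/c')^M` for all `ε ∈ (0, c]`
(with `√θ̃` interpreted as `√(max θ̃ 0)` via `Real.sqrt`). -/
theorem concentration_sqrt
    {Ω : Type*} [MeasurableSpace Ω] (μ : Measure Ω) [IsProbabilityMeasure μ]
    (θtilde : Ω → ℝ) (hmeas : Measurable θtilde)
    (θ a btilde c c₁ : ℝ) (M : ℕ) (hM : 0 < M)
    (hbt : 0 < btilde) (hθl : btilde < θ) (hθu : θ ≤ a)
    (hc : 0 < c) (hc₁ : c ^ 2 < c₁)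
    (hconc : ∀ ε ∈ Set.Ioc (0 : ℝ) c,
      (μ {ω | ε ≤ |θtilde ω - θ|}).toReal ≤ c₁ * (1 - ε ^ 2 / c₁) ^ M) :
    ∃ c' > (0 : ℝ), ∀ ε ∈ Set.Ioc (0 : ℝ) c,
      (μ {ω | ε ≤ |Real.sqrt (θtilde ω) - Real.sqrt θ|}).toReal
        ≤ c' * (1 - ε ^ 2 / c') ^ M := by
  have hθ0 : 0 < θ := hbt.trans hθl
  set k : ℝ := min (Real.sqrt btilde) 1 with hkdef
  have hk0 : 0 < k := lt_min (Real.sqrt_pos.2 hbt) one_pos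
  have hk1 : k ≤ 1 := min_le_right _ _
  have hc₁0 : 0 < c₁ := lt_trans (by positivity) hc₁
  refine ⟨c₁ / k ^ 2, by positivity, ?_⟩
  rintro ε ⟨hε0, hεc⟩
  have hkε0 : 0 < k * ε := mul_pos hk0 hε0
  have hkεc : k * ε ≤ c := le_trans (mul_le_of_le_one_left hε0.le hk1) hεc
  have hsub : {ω | ε ≤ |Real.sqrt (θtilde ω) - Real.sqrt θ|}
      ⊆ {ω | k * ε ≤ |θtilde ω - θ|} := by
    intro ω hω
    simp only [Set.mem_setOf_eq] at hω ⊢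
    set x := θtilde ω
    have hsθ : 0 < Real.sqrt θ := Real.sqrt_pos.2 hθ0
    have hsθsq : Real.sqrt θ ^ 2 = θ := Real.sq_sqrt hθ0.le
    have key : Real.sqrt θ * |Real.sqrt x - Real.sqrt θ| ≤ |x - θ| := by
      rcases le_or_gt 0 x with hx | hx
      · have hsx : 0 ≤ Real.sqrt x := Real.sqrt_nonneg x
        have hsxsq : Real.sqrt x ^ 2 = x := Real.sq_sqrt hx
        have h1 : |Real.sqrt x - Real.sqrt θ| * (Real.sqrt x + Real.sqrt θ)
            = |x - θ| := by
          rw [← abs_of_nonneg (by positivity : (0:ℝ) ≤ Real.sqrt x + Real.sqrt θ),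
            ← abs_mul]
          ring_nf
          rw [hsxsq, hsθsq]
        nlinarith [abs_nonneg (Real.sqrt x - Real.sqrt θ)]
      · have hsx : Real.sqrt x = 0 := Real.sqrt_eq_zero_of_nonpos hx.le
        rw [hsx, zero_sub, abs_neg, abs_of_nonneg hsθ.le,
          abs_of_nonpos (by linarith)]
        nlinarith
    have hkθ : k ≤ Real.sqrt θ :=
      le_trans (min_le_left _ _) (Real.sqrt_le_sqrt (le_of_lt hθl))
    calc k * ε ≤ Real.sqrt θ * |Real.sqrt x - Real.sqrt θ| := by
          apply mul_le_mul hkθ hω (le_of_lt hε0) hsθ.le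
      _ ≤ |x - θ| := key
  have hmono : (μ {ω | ε ≤ |Real.sqrt (θtilde ω) - Real.sqrt θ|}).toReal
      ≤ (μ {ω | k * ε ≤ |θtilde ω - θ|}).toReal := by
    apply ENNReal.toReal_mono (measure_ne_top μ _) (measure_mono hsub)
  have hb := hconc (k * ε) ⟨hkε0, hkεc⟩
  have heq : 1 - (k * ε) ^ 2 / c₁ = 1 - ε ^ 2 / (c₁ / k ^ 2) := by
    field_simp
  have hk2 : k ^ 2 ≤ 1 := by nlinarith
  have hpow0 : 0 ≤ 1 - ε ^ 2 / (c₁ / k ^ 2) := by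
    have h1 : ε ^ 2 ≤ c ^ 2 := by nlinarith
    have h2 : c₁ ≤ c₁ / k ^ 2 := by
      rw [le_div_iff₀ (by positivity)]
      nlinarith
    have : ε ^ 2 / (c₁ / k ^ 2) ≤ 1 := by
      rw [div_le_one (by positivity)]
      nlinarith
    linarith
  calc (μ {ω | ε ≤ |Real.sqrt (θtilde ω) - Real.sqrt θ|}).toReal
      ≤ c₁ * (1 - (k * ε) ^ 2 / c₁) ^ M := le_trans hmono hb
    _ = c₁ * (1 - ε ^ 2 / (c₁ / k ^ 2)) ^ M := by rw [heq]
    _ ≤ (c₁ / k ^ 2) * (1 - ε ^ 2 / (c₁ / k ^ 2)) ^ M := by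
        apply mul_le_mul_of_nonneg_right _ (pow_nonneg hpow0 M)
        rw [le_div_iff₀ (by positivity)]
        nlinarith
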